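/- Let N ≥ 1 be a natural number and C₁, C₂, C₃ ≥ 0 real constants. Suppose A : ℕ → Fin N → ℝ satisfies A(0, n) = 0 for every n, and for every r ≥ 1 and every n, A(r, n) ≤ r · ∑_{y=0}^{r−1} ( C₁ + C₂ · ∑_{j ∈ Fin N} A(y, j) + C₃ ). Then for every r and every n, A(r, n) ≤ (C₁ + C₃) · ∑_{y=0}^{r−1} (r choose y) · r^r · (C₂·N)^y. -/

import Mathlib

open Finset

private lemma key_nat (m z : ℕ) :
    ∑ y ∈ Ico (z+1) (m+1), y.choose z ≤ (m+1).choose (z+1) := by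
  calc ∑ y ∈ Ico (z+1) (m+1), y.choose z
      ≤ ∑ y ∈ Icc z m, y.choose z := by
        apply Finset.sum_le_sum_of_subset
        intro y hy
        simp only [mem_Ico, mem_Icc] at *
        omega
    _ = (m+1).choose (z+1) := Nat.sum_Icc_choose m z

private lemma key (m : ℕ) (D : ℝ) (hD : 0 ≤ D) :
    ((m+1 : ℕ) : ℝ) * ∑ y ∈ range (m+1),
        (1 + D * ∑ z ∈ range y, (y.choose z : ℝ) * (y : ℝ) ^ y * D ^ z)
      ≤ ∑ y ∈ range (m+1), (((m+1 : ℕ).choose y : ℝ)) * ((m+1 : ℕ) : ℝ) ^ (m+1) * D ^ y := by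
  set R : ℝ := ((m+1 : ℕ) : ℝ) ^ m with hR
  have hRnn : 0 ≤ R := by positivity
  have hyy : ∀ y ∈ range (m+1), ((y : ℝ)) ^ y ≤ R := by
    intro y hy
    rw [mem_range] at hy
    have : y ^ y ≤ (m+1) ^ m := by
      rcases Nat.eq_zero_or_pos y with h | h
      · subst h; simpa using Nat.one_le_pow _ _ (Nat.succ_pos m)
      · calc y ^ y ≤ y ^ m := Nat.pow_le_pow_right h (by omega)
          _ ≤ (m+1) ^ m := Nat.pow_le_pow_left (by omega) m
    calc ((y : ℝ)) ^ y = ((y ^ y : ℕ) : ℝ) := (Nat.cast_pow y y).symm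
      _ ≤ (((m+1) ^ m : ℕ) : ℝ) := by exact_mod_cast this
      _ = R := by rw [hR, Nat.cast_pow]
  set G : ℝ := ∑ y ∈ range (m+1), ∑ z ∈ range y, (y.choose z : ℝ) * D ^ z with hGdef
  have hswap : G = ∑ z ∈ range (m+1), ∑ y ∈ Ico (z+1) (m+1), (y.choose z : ℝ) * D ^ z := by
    rw [hGdef]
    simp only [Finset.range_eq_Ico]
    exact (Finset.sum_Ico_Ico_comm' 0 (m+1) fun z y => (y.choose z : ℝ) * D ^ z).symm
  have hG : G ≤ ∑ z ∈ range m, (((m+1).choose (z+1) : ℝ)) * D ^ z := by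
    rw [hswap, Finset.sum_range_succ]
    have : Ico (m+1) (m+1) = ∅ := Ico_self (m+1)
    rw [this, Finset.sum_empty, add_zero]
    apply Finset.sum_le_sum
    intro z hz
    have hc : ((∑ y ∈ Ico (z+1) (m+1), y.choose z : ℕ) : ℝ) ≤ ((m+1).choose (z+1) : ℝ) := by
      exact_mod_cast key_nat m z
    calc ∑ y ∈ Ico (z+1) (m+1), (y.choose z : ℝ) * D ^ z
        = ((∑ y ∈ Ico (z+1) (m+1), y.choose z : ℕ) : ℝ) * D ^ z := by
          rw [← Finset.sum_mul]; push_cast; ring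
      _ ≤ ((m+1).choose (z+1) : ℝ) * D ^ z := by gcongr
  calc ((m+1 : ℕ) : ℝ) * ∑ y ∈ range (m+1),
          (1 + D * ∑ z ∈ range y, (y.choose z : ℝ) * (y : ℝ) ^ y * D ^ z)
      ≤ ((m+1 : ℕ) : ℝ) * ∑ y ∈ range (m+1),
          (1 + D * ∑ z ∈ range y, (y.choose z : ℝ) * R * D ^ z) := by
        apply mul_le_mul_of_nonneg_left _ (Nat.cast_nonneg _)
        apply Finset.sum_le_sum
        intro y hy
        apply add_le_add_right
        apply mul_le_mul_of_nonneg_left _ hD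
        apply Finset.sum_le_sum
        intro z hz
        exact mul_le_mul_of_nonneg_right
          (mul_le_mul_of_nonneg_left (hyy y hy) (Nat.cast_nonneg _)) (pow_nonneg hD z)
    _ = ((m+1 : ℕ) : ℝ) * ((m+1 : ℕ) : ℝ) + ((m+1 : ℕ) : ℝ) * R * D * G := by
        have e1 : ∀ y, (1 + D * ∑ z ∈ range y, (y.choose z : ℝ) * R * D ^ z)
            = 1 + D * R * ∑ z ∈ range y, (y.choose z : ℝ) * D ^ z := by
          intro y
          rw [Finset.mul_sum, Finset.mul_sum]
          congr 1
          apply Finset.sum_congr rfl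
          intros; ring
        simp only [e1]
        rw [Finset.sum_add_distrib, ← Finset.mul_sum, Finset.sum_const, Finset.card_range,
          nsmul_eq_mul, mul_one, ← hGdef]
        ring
    _ ≤ ((m+1 : ℕ) : ℝ) * ((m+1 : ℕ) : ℝ)
        + ((m+1 : ℕ) : ℝ) * R * D * ∑ z ∈ range m, (((m+1).choose (z+1) : ℝ)) * D ^ z := by
        gcongr
    _ ≤ ((m+1 : ℕ) : ℝ) ^ (m+1)
        + ∑ z ∈ range m, (((m+1 : ℕ).choose (z+1) : ℝ)) * ((m+1 : ℕ) : ℝ) ^ (m+1) * D ^ (z+1) := by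
        apply add_le_add
        · have : (m+1) * (m+1) ≤ (m+1) ^ (m+1) := by
            calc (m+1) * (m+1) = (m+1) ^ 2 := by ring
              _ ≤ (m+1) ^ (m+1) := by
                rcases Nat.eq_zero_or_pos m with h | h
                · subst h; norm_num
                · exact Nat.pow_le_pow_right (by omega) (by omega)
          calc ((m+1 : ℕ) : ℝ) * ((m+1 : ℕ) : ℝ) = (((m+1) * (m+1) : ℕ) : ℝ) := by push_cast; ring
            _ ≤ (((m+1) ^ (m+1) : ℕ) : ℝ) := by exact_mod_cast this
            _ = ((m+1 : ℕ) : ℝ) ^ (m+1) := by push_cast; ring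
        · rw [Finset.mul_sum]
          apply le_of_eq
          apply Finset.sum_congr rfl
          intro z hz
          have : ((m+1 : ℕ) : ℝ) * R = ((m+1 : ℕ) : ℝ) ^ (m+1) := by
            rw [hR]; ring
          rw [← this]; ring
    _ = ∑ y ∈ range (m+1), (((m+1 : ℕ).choose y : ℝ)) * ((m+1 : ℕ) : ℝ) ^ (m+1) * D ^ y := by
        rw [Finset.sum_range_succ']
        simp [add_comm]

/-- Combinatorial recursion bound from Proposition 1: if `A 0 n = 0` and
`A r n ≤ r · ∑_{y<r} (C₁ + C₂ · ∑_j A y j + C₃)` for `r ≥ 1`, then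
`A r n ≤ (C₁+C₃) · ∑_{y<r} (r choose y) · r^r · (C₂·N)^y`. -/
theorem stmt_3 (N : ℕ) (hN : 1 ≤ N) (C₁ C₂ C₃ : ℝ)
    (hC₁ : 0 ≤ C₁) (hC₂ : 0 ≤ C₂) (hC₃ : 0 ≤ C₃)
    (A : ℕ → Fin N → ℝ) (h0 : ∀ n, A 0 n = 0)
    (hrec : ∀ r, 1 ≤ r → ∀ n, A r n ≤
      (r : ℝ) * ∑ y ∈ Finset.range r, (C₁ + C₂ * ∑ j : Fin N, A y j + C₃)) :
    ∀ r n, A r n ≤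
      (C₁ + C₃) * ∑ y ∈ Finset.range r,
        (r.choose y : ℝ) * (r : ℝ) ^ r * (C₂ * N) ^ y := by
  intro r
  induction r using Nat.strong_induction_on with
  | _ r ih =>
    intro n
    rcases r with _ | m
    · simp [h0]
    set D : ℝ := C₂ * N with hD
    have hDnn : 0 ≤ D := by positivity
    have hK : 0 ≤ C₁ + C₃ := by positivity
    calc A (m+1) n ≤ ((m+1 : ℕ) : ℝ) * ∑ y ∈ Finset.range (m+1),
            (C₁ + C₂ * ∑ j : Fin N, A y j + C₃) := hrec (m+1) (by omega) n
      _ ≤ ((m+1 : ℕ) : ℝ) * ∑ y ∈ Finset.range (m+1),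
            (C₁ + C₂ * ∑ j : Fin N, ((C₁ + C₃) *
              ∑ z ∈ Finset.range y, (y.choose z : ℝ) * (y : ℝ) ^ y * D ^ z) + C₃) := by
          apply mul_le_mul_of_nonneg_left _ (by positivity : (0:ℝ) ≤ ((m+1:ℕ):ℝ))
          apply Finset.sum_le_sum
          intro y hy
          refine add_le_add_left (add_le_add_right ?_ C₁) C₃
          apply mul_le_mul_of_nonneg_left _ hC₂
          apply Finset.sum_le_sum
          intro j hj
          exact ih y (Finset.mem_range.mp hy) j
      _ = (C₁ + C₃) * (((m+1 : ℕ) : ℝ) * ∑ y ∈ Finset.range (m+1),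
            (1 + D * ∑ z ∈ Finset.range y, (y.choose z : ℝ) * (y : ℝ) ^ y * D ^ z)) := by
          rw [Finset.mul_sum, Finset.mul_sum, Finset.mul_sum]
          apply Finset.sum_congr rfl
          intro y hy
          rw [Finset.sum_const, Finset.card_univ, Fintype.card_fin, nsmul_eq_mul, hD]
          ring
      _ ≤ (C₁ + C₃) * ∑ y ∈ Finset.range (m+1),
            (((m+1 : ℕ).choose y : ℝ)) * ((m+1 : ℕ) : ℝ) ^ (m+1) * D ^ y := by
          gcongr
          exact key m D hDnn
      _ = (C₁ + C₃) * ∑ y ∈ Finset.range (m+1),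
            (((m+1).choose y : ℝ)) * ((m+1 : ℕ) : ℝ) ^ (m+1) * (C₂ * N) ^ y := by rw [hD]
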